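/- Let C be a nonempty unbounded closed convex subset of a real normed linear space X such that the closure of the affine hull of C is not equal to X. Then barc(C) ≠ Int barc(C) ∪ {0}; that is, there exists a nonzero x* ∈ barc(C) that does not belong to the interior of barc(C). -/
import Mathlib


/-- The barrier cone of a set `C` in a normed space. -/
def barrierCone {X : Type*} [NormedAddCommGroup X] [NormedSpace ℝ X] (C : Set X) :
    Set (X →L[ℝ] ℝ) :=
  {f | ∃ b : ℝ, ∀ c ∈ C, f c ≤ b}

/-- If `C` is a nonempty unbounded closed convex subset of a real normed space `X`
with `closure (aff C) ≠ X`, then `barc(C) ≠ Int barc(C) ∪ {0}`. -/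
theorem statement8 {X : Type*} [NormedAddCommGroup X] [NormedSpace ℝ X]
    (C : Set X) (hne : C.Nonempty) (hcl : IsClosed C) (hconv : Convex ℝ C)
    (hunbdd : ¬ Bornology.IsBounded C)
    (haff : closure ((affineSpan ℝ C : AffineSubspace ℝ X) : Set X) ≠ Set.univ) :
    barrierCone C ≠ interior (barrierCone C) ∪ {0} := by
  intro heq
  obtain ⟨x0, hx0⟩ := hne
  obtain ⟨z, hz⟩ := (Set.ne_univ_iff_exists_notMem _).mp haff
  obtain ⟨f, u, hfu, hux⟩ := geometric_hahn_banach_closed_point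
    ((affineSpan ℝ C).convex.closure) isClosed_closure hz
  -- f is constant on the affine span
  have hconst : ∀ p ∈ affineSpan ℝ C, ∀ q ∈ affineSpan ℝ C, f p = f q := by
    intro p hp q hq
    by_contra hne'
    have hd : f q - f p ≠ 0 := sub_ne_zero.mpr fun h => hne' h.symm
    set t : ℝ := (u - f p) / (f q - f p) with ht
    have hpt : t • (q -ᵥ p) +ᵥ p ∈ affineSpan ℝ C :=
      AffineSubspace.smul_vsub_vadd_mem _ t hq hp hp
    have hlt := hfu _ (subset_closure hpt)
    have hval : f (t • (q -ᵥ p) +ᵥ p) = u := by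
      have : f (t • (q -ᵥ p) +ᵥ p) = t * (f q - f p) + f p := by
        simp [vsub_eq_sub, vadd_eq_add, map_add, map_smul, map_sub]
      rw [this, ht, div_mul_cancel₀ _ hd]
      ring
    rw [hval] at hlt
    exact lt_irrefl u hlt
  have hmemS : ∀ c ∈ C, c ∈ closure ((affineSpan ℝ C : AffineSubspace ℝ X) : Set X) :=
    fun c hc => subset_closure (subset_affineSpan ℝ C hc)
  have hfc : ∀ c ∈ C, f c = f x0 := fun c hc =>
    hconst c (subset_affineSpan ℝ C hc) x0 (subset_affineSpan ℝ C hx0)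
  have hfbar : f ∈ barrierCone C := ⟨f x0, fun c hc => (hfc c hc).le⟩
  have hf0 : f ≠ 0 := by
    intro h0
    have h1 := hfu x0 (hmemS x0 hx0)
    rw [h0] at h1 hux
    simp at h1 hux
    linarith
  -- f must be in the interior
  have hfint : f ∈ interior (barrierCone C) := by
    have hmem : f ∈ interior (barrierCone C) ∪ {0} := heq ▸ hfbar
    rcases hmem with h | h
    · exact h
    · exact absurd h hf0
  obtain ⟨ε, hε, hball⟩ := Metric.mem_nhds_iff.mp (mem_interior_iff_mem_nhds.mp hfint)
  have hballbar : Metric.ball f ε ⊆ barrierCone C := hball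
  -- every functional is in the barrier cone
  have hall : ∀ g : X →L[ℝ] ℝ, g ∈ barrierCone C := by
    intro g
    rcases eq_or_ne g 0 with rfl | hg
    · exact ⟨0, fun c _ => le_of_eq rfl⟩
    · set s : ℝ := ε / 2 / ‖g‖ with hs
      have hspos : 0 < s := div_pos (half_pos hε) (norm_pos_iff.mpr hg)
      have hmem : f + s • g ∈ barrierCone C := by
        apply hballbar
        have : dist (f + s • g) f = s * ‖g‖ := by
          rw [dist_eq_norm, add_sub_cancel_left]
          exact (norm_smul s g).trans (by rw [Real.norm_eq_abs, abs_of_pos hspos])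
        rw [Metric.mem_ball, this, hs, div_mul_cancel₀ _ (norm_ne_zero_iff.mpr hg)]
        linarith
      obtain ⟨b1, hb1⟩ := hmem
      refine ⟨(b1 - f x0) / s, fun c hc => ?_⟩
      have h1 := hb1 c hc
      simp only [ContinuousLinearMap.add_apply, ContinuousLinearMap.coe_smul',
        Pi.smul_apply, smul_eq_mul] at h1
      have h2 := hfc c hc
      rw [le_div_iff₀ hspos]
      nlinarith
  -- pointwise boundedness of the evaluation family on the dual
  have hpb : ∀ φ : StrongDual ℝ X,
      ∃ B, ∀ c : C, ‖(NormedSpace.inclusionInDoubleDual ℝ X (c : X)) φ‖ ≤ B := by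
    intro φ
    obtain ⟨b1, h1⟩ := hall φ
    obtain ⟨b2, h2⟩ := hall (-φ)
    refine ⟨max b1 b2, fun c => ?_⟩
    have hc1 := h1 c c.2
    have hc2 := h2 c c.2
    simp only [ContinuousLinearMap.neg_apply] at hc2
    rw [NormedSpace.dual_def, Real.norm_eq_abs, abs_le]
    constructor
    · have : b2 ≤ max b1 b2 := le_max_right _ _
      linarith
    · exact hc1.trans (le_max_left _ _)
  obtain ⟨B, hB⟩ := banach_steinhaus hpb
  apply hunbdd
  rw [isBounded_iff_forall_norm_le]
  refine ⟨B, fun x hx => ?_⟩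
  have := hB ⟨x, hx⟩
  rwa [show NormedSpace.inclusionInDoubleDual ℝ X x =
      NormedSpace.inclusionInDoubleDualLi ℝ (E := X) x from rfl,
    (NormedSpace.inclusionInDoubleDualLi ℝ (E := X)).norm_map x] at this
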